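/- Let A be a strongly connected synchronizing automaton, p a positive probability vector on Σ, S = Σ_a p(a)[a], and α the steady-state distribution of S. If x ∈ R^n satisfies (x, α) = 0 and v is a word of minimum length with ([v]^T x, α) > 0, then ([u]^T x, α) = 0 for every word u with |u| < |v|, and |v| ≤ n − 1. -/

import Mathlib

open Matrix

/-- The 0-1 transition matrix of a letter: `(p,q)`-entry is 1 iff `δ q a = p`. -/
def letterMat {n k : ℕ} (δ : Fin n → Fin k → Fin n) (a : Fin k) :
    Matrix (Fin n) (Fin n) ℝ :=
  fun p q => if δ q a = p then 1 else 0

/-- The matrix of a word, satisfying `[u][K] = [K·u]`. -/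
def wordMat {n k : ℕ} (δ : Fin n → Fin k → Fin n) (w : List (Fin k)) :
    Matrix (Fin n) (Fin n) ℝ :=
  (w.reverse.map (letterMat δ)).prod

/-- The action of a word on a state. -/
def act {n k : ℕ} (δ : Fin n → Fin k → Fin n) (w : List (Fin k)) (q : Fin n) : Fin n :=
  w.foldl δ q

/-- A word is a reset word if it maps all states to one state. -/
def IsReset {n k : ℕ} (δ : Fin n → Fin k → Fin n) (w : List (Fin k)) : Prop :=
  ∀ p q : Fin n, act δ w p = act δ w q

lemma wordMat_nil {n k : ℕ} (δ : Fin n → Fin k → Fin n) :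
    wordMat δ ([] : List (Fin k)) = 1 := rfl

lemma wordMat_cons {n k : ℕ} (δ : Fin n → Fin k → Fin n) (a : Fin k) (u : List (Fin k)) :
    wordMat δ (a :: u) = wordMat δ u * letterMat δ a := by
  simp [wordMat]

lemma wordMat_concat {n k : ℕ} (δ : Fin n → Fin k → Fin n) (u : List (Fin k)) (a : Fin k) :
    wordMat δ (u ++ [a]) = letterMat δ a * wordMat δ u := by
  simp [wordMat]

lemma sum_smul_mulVec {n m : ℕ} (p : Fin m → ℝ) (M : Fin m → Matrix (Fin n) (Fin n) ℝ)
    (v : Fin n → ℝ) : (∑ a, p a • M a) *ᵥ v = ∑ a, p a • (M a *ᵥ v) := by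
  ext i
  simp only [Matrix.mulVec, dotProduct, Finset.sum_apply, Pi.smul_apply,
    Matrix.sum_apply, Matrix.smul_apply, Finset.sum_mul, Finset.mul_sum, smul_eq_mul]
  rw [Finset.sum_comm]
  apply Finset.sum_congr rfl
  intro a _
  apply Finset.sum_congr rfl
  intro j _
  ring

lemma dotProduct_finsum {n m : ℕ} (x : Fin n → ℝ) (f : Fin m → Fin n → ℝ) :
    x ⬝ᵥ (∑ a, f a) = ∑ a, x ⬝ᵥ f a := by
  simp only [dotProduct, Finset.sum_apply, Finset.mul_sum]
  rw [Finset.sum_comm]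

/-- If `(x, α) = 0` and `v` is a word of minimum length with `([v]ᵀ x, α) > 0`,
then `([u]ᵀ x, α) = 0` for every shorter word `u`, and `|v| ≤ n - 1`. -/
theorem stmt7 {n k : ℕ} (δ : Fin n → Fin k → Fin n)
    (hsc : ∀ s q : Fin n, ∃ w : List (Fin k), act δ w s = q)
    (hsync : ∃ w, IsReset δ w)
    (p : Fin k → ℝ) (hp : ∀ a, 0 < p a) (hp1 : ∑ a, p a = 1)
    (α : Fin n → ℝ) (hαpos : ∀ i, 0 < α i) (hα1 : ∑ i, α i = 1)
    (hαeig : (∑ a, p a • letterMat δ a).mulVec α = α)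
    (x : Fin n → ℝ) (hx : x ⬝ᵥ α = 0)
    (v : List (Fin k))
    (hv : 0 < (wordMat δ v)ᵀ.mulVec x ⬝ᵥ α)
    (hvmin : ∀ u : List (Fin k), 0 < (wordMat δ u)ᵀ.mulVec x ⬝ᵥ α →
      v.length ≤ u.length) :
    (∀ u : List (Fin k), u.length < v.length → (wordMat δ u)ᵀ.mulVec x ⬝ᵥ α = 0) ∧
    v.length ≤ n - 1 := by
  -- `n` is positive
  have hn : 0 < n := by
    rcases Nat.eq_zero_or_pos n with h | h
    · subst h; simp at hα1
    · exact h
  set g : List (Fin k) → ℝ := fun u => x ⬝ᵥ (wordMat δ u).mulVec α with hgdef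
  have hconv : ∀ u : List (Fin k), (wordMat δ u)ᵀ.mulVec x ⬝ᵥ α = g u := by
    intro u
    rw [Matrix.mulVec_transpose, ← Matrix.dotProduct_mulVec]
  -- the averaging identity
  have key : ∀ u : List (Fin k), ∑ a, p a * g (a :: u) = g u := by
    intro u
    have h1 : ∀ a : Fin k, g (a :: u) = x ⬝ᵥ (wordMat δ u) *ᵥ ((letterMat δ a) *ᵥ α) := by
      intro a
      rw [hgdef]
      simp only [wordMat_cons, ← Matrix.mulVec_mulVec]
    calc ∑ a, p a * g (a :: u)
        = ∑ a, x ⬝ᵥ ((wordMat δ u) *ᵥ (p a • ((letterMat δ a) *ᵥ α))) := by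
          apply Finset.sum_congr rfl
          intro a _
          rw [h1 a, Matrix.mulVec_smul, dotProduct_smul, smul_eq_mul]
      _ = x ⬝ᵥ ((wordMat δ u) *ᵥ (∑ a, p a • ((letterMat δ a) *ᵥ α))) := by
          rw [← dotProduct_finsum]
          congr 1
          ext i
          simp only [Matrix.mulVec, dotProduct, Finset.sum_apply, Pi.smul_apply,
            Finset.mul_sum, smul_eq_mul]
          rw [Finset.sum_comm]
      _ = g u := by
          rw [← sum_smul_mulVec, hαeig]
  -- shorter words have nonpositive value
  have hle : ∀ u : List (Fin k), u.length < v.length → g u ≤ 0 := by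
    intro u hu
    by_contra h
    push_neg at h
    have := hvmin u (by rwa [hconv])
    omega
  -- part 1 : all shorter words have value 0, by induction on length
  have part1 : ∀ ℓ, ℓ < v.length → ∀ u : List (Fin k), u.length = ℓ → g u = 0 := by
    intro ℓ
    induction ℓ with
    | zero =>
      intro _ u hu
      have : u = [] := List.length_eq_zero_iff.mp hu
      subst this
      simp [hgdef, wordMat_nil, Matrix.one_mulVec, hx]
    | succ m ih =>
      intro hm u hu
      obtain ⟨a, t, rfl⟩ : ∃ a t, u = a :: t := by
        cases u with
        | nil => simp at hu
        | cons a t => exact ⟨a, t, rfl⟩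
      have ht : t.length = m := by simpa using hu
      have h0 : ∑ b, p b * g (b :: t) = 0 := by
        rw [key]; exact ih (by omega) t ht
      have hterm : ∀ b ∈ Finset.univ, p b * g (b :: t) ≤ 0 := by
        intro b _
        exact mul_nonpos_of_nonneg_of_nonpos (hp b).le
          (hle _ (by simp only [List.length_cons, ht]; omega))
      have hz := (Finset.sum_eq_zero_iff_of_nonpos hterm).mp h0 a (Finset.mem_univ a)
      have := (hp a).ne'
      rcases mul_eq_zero.mp hz with h | h
      · exact absurd h this
      · exact h
  refine ⟨fun u hu => by rw [hconv]; exact part1 u.length hu u rfl, ?_⟩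
  -- part 2 : the dimension argument
  classical
  set V : ℕ → Submodule ℝ (Fin n → ℝ) := fun ℓ =>
    Submodule.span ℝ ((fun u : List (Fin k) => (wordMat δ u).mulVec α) ''
      {u : List (Fin k) | u.length ≤ ℓ}) with hVdef
  have hmem : ∀ (u : List (Fin k)) (ℓ : ℕ), u.length ≤ ℓ → (wordMat δ u).mulVec α ∈ V ℓ :=
    fun u ℓ h => Submodule.subset_span ⟨u, h, rfl⟩
  have hVmono : ∀ ℓ m, ℓ ≤ m → V ℓ ≤ V m := by
    intro ℓ m h
    exact Submodule.span_mono (Set.image_mono (fun u hu => le_trans hu h))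
  have hmap : ∀ (ℓ : ℕ) (a : Fin k),
      (V ℓ).map (Matrix.mulVecLin (letterMat δ a)) ≤ V (ℓ + 1) := by
    intro ℓ a
    rw [hVdef]
    rw [Submodule.map_span, Submodule.span_le]
    rintro _ ⟨_, ⟨u, hu, rfl⟩, rfl⟩
    have he : (letterMat δ a).mulVecLin ((wordMat δ u).mulVec α)
        = (wordMat δ (u ++ [a])).mulVec α := by
      rw [Matrix.mulVecLin_apply, wordMat_concat, ← Matrix.mulVec_mulVec]
    rw [he]
    exact Submodule.subset_span ⟨u ++ [a], by simpa using Nat.add_le_add_right hu 1, rfl⟩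
  -- stabilization
  have hstab : ∀ ℓ, V ℓ = V (ℓ + 1) → ∀ m, V (ℓ + m) = V ℓ := by
    intro ℓ h m
    induction m with
    | zero => rfl
    | succ j ih =>
      refine le_antisymm ?_ (hVmono ℓ _ (by omega))
      rw [show ℓ + (j + 1) = (ℓ + j) + 1 from rfl]
      rw [hVdef, Submodule.span_le]
      rintro _ ⟨u, hu, rfl⟩
      simp only [Set.mem_setOf_eq] at hu
      rcases Nat.lt_or_ge u.length (ℓ + j + 1) with h' | h'
      · have hm := hmem u (ℓ + j) (by omega)
        rw [ih] at hm
        exact hm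
      · rcases List.eq_nil_or_concat u with rfl | ⟨t, a, rfl⟩
        · simp at h'
        · have ht : t.length ≤ ℓ + j := by
            simp only [List.concat_eq_append, List.length_append, List.length_cons,
              List.length_nil] at hu ⊢
            omega
          have htm : (wordMat δ t).mulVec α ∈ V ℓ := ih ▸ hmem t (ℓ + j) ht
          have : (wordMat δ (t ++ [a])).mulVec α ∈ V (ℓ + 1) := by
            apply hmap ℓ a
            refine ⟨(wordMat δ t).mulVec α, htm, ?_⟩
            rw [Matrix.mulVecLin_apply, wordMat_concat, ← Matrix.mulVec_mulVec]
          rw [← h] at this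
          simpa using this
  -- x as a linear functional
  let φ : (Fin n → ℝ) →ₗ[ℝ] ℝ :=
    { toFun := fun y => x ⬝ᵥ y
      map_add' := fun y z => dotProduct_add x y z
      map_smul' := fun c y => by simp [dotProduct_smul] }
  -- strict increase
  have hstrict : ∀ ℓ, ℓ < v.length → V ℓ < V (ℓ + 1) := by
    intro ℓ hℓ
    refine lt_of_le_of_ne (hVmono ℓ (ℓ + 1) (by omega)) ?_
    intro he
    have hve : V v.length = V ℓ := by
      have := hstab ℓ he (v.length - ℓ)
      rwa [show ℓ + (v.length - ℓ) = v.length by omega] at this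
    have hker : V ℓ ≤ LinearMap.ker φ := by
      rw [hVdef, Submodule.span_le]
      rintro _ ⟨u, hu, rfl⟩
      simp only [Set.mem_setOf_eq] at hu
      have : g u = 0 := part1 u.length (by omega) u rfl
      simpa [φ, LinearMap.mem_ker] using this
    have hvmem : (wordMat δ v).mulVec α ∈ V ℓ := hve ▸ hmem v v.length le_rfl
    have : φ ((wordMat δ v).mulVec α) = 0 := hker hvmem
    have hgv : g v = 0 := this
    rw [hconv] at hv
    linarith
  -- finrank grows along the chain
  have hfr : ∀ ℓ, ℓ ≤ v.length → ℓ + 1 ≤ Module.finrank ℝ (V ℓ) := by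
    intro ℓ
    induction ℓ with
    | zero =>
      intro _
      have hα0 : α ∈ V 0 := by
        have := hmem [] 0 (by simp)
        simpa [wordMat_nil, Matrix.one_mulVec] using this
      have hαne : α ≠ 0 := by
        intro h
        have := hαpos ⟨0, hn⟩
        rw [h] at this
        simp at this
      have hbot : V 0 ≠ ⊥ := by
        intro h
        rw [h, Submodule.mem_bot] at hα0
        exact hαne hα0
      have : Module.finrank ℝ (V 0) ≠ 0 := fun h => hbot (Submodule.finrank_eq_zero.mp h)
      omega
    | succ m ih =>
      intro h
      have h1 := ih (by omega)
      have h2 := Submodule.finrank_lt_finrank_of_lt (hstrict m (by omega))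
      omega
  have hfin : Module.finrank ℝ (V v.length) ≤ n := by
    have := Submodule.finrank_le (V v.length)
    simpa using this
  have := hfr v.length le_rfl
  omega
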